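/- arXiv:1010.5223 — 2 statements merged into one kernel-verified Lean document; each statement's English description precedes it below -/
import Mathlib

section
/- Let a, b, τ > 0 with |1 − 1/τ²| < 1, s ∈ ℝ, σ > 0, and y ∈ ℝ; set a' = a + 1/2 and s' = s + y²/(2σ²). If κ is distributed with the hypergeometric-beta density π_{a',b,τ,s'}, then for every positive integer n, E[κⁿ] = ∫₀¹ κⁿ π_{a',b,τ,s'}(κ) dκ = [(a')_n / (a'+b)_n] · Φ₁(b, 1; a'+b+n; s', 1−1/τ²) / Φ₁(b, 1; a'+b; s', 1−1/τ²). -/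
open MeasureTheory Set
set_option maxHeartbeats 1000000

/-- The unnormalized hypergeometric-beta kernel
`κ^{a−1} (1−κ)^{b−1} {1/τ² + (1 − 1/τ²)κ}^{−1} e^{−sκ}`. -/
noncomputable def hbKer (a b τ s κ : ℝ) : ℝ :=
  κ ^ (a - 1) * (1 - κ) ^ (b - 1) * (1 / τ ^ 2 + (1 - 1 / τ ^ 2) * κ)⁻¹ *
    Real.exp (-(s * κ))

/-- The normalizing constant `C(a,b,τ,s)`. -/
noncomputable def hbC (a b τ s : ℝ) : ℝ :=
  ∫ κ in Set.Ioo (0 : ℝ) 1, hbKer a b τ s κ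

/-- The hypergeometric-beta density `π_{a,b,τ,s}` on `(0,1)`. -/
noncomputable def hbPdf (a b τ s κ : ℝ) : ℝ :=
  (hbC a b τ s)⁻¹ * hbKer a b τ s κ

/-- The rising factorial `(q)_k = q (q+1) ⋯ (q+k−1)`. -/
noncomputable def risingFac (q : ℝ) (k : ℕ) : ℝ :=
  ∏ i ∈ Finset.range k, (q + (i : ℝ))

/-- The degenerate (Humbert) hypergeometric function of two variables
`Φ₁(α, β; γ; x, y) = Σ_{m,n≥0} [(α)_{m+n} (β)_n / ((γ)_{m+n} m! n!)] x^m y^n`. -/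
noncomputable def Phi1 (α β γ x y : ℝ) : ℝ :=
  ∑' p : ℕ × ℕ,
    risingFac α (p.1 + p.2) * risingFac β p.2 /
      (risingFac γ (p.1 + p.2) * (Nat.factorial p.1) * (Nat.factorial p.2)) *
      x ^ p.1 * y ^ p.2

/-- The Euler beta function `B(a,b) = Γ(a)Γ(b)/Γ(a+b)`. -/
noncomputable def betaFn (a b : ℝ) : ℝ :=
  Real.Gamma a * Real.Gamma b / Real.Gamma (a + b)


lemma risingFac_pos {q : ℝ} (hq : 0 < q) (n : ℕ) : 0 < risingFac q n :=
  Finset.prod_pos fun i _ => by positivity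

lemma risingFac_one (n : ℕ) : risingFac 1 n = n.factorial := by
  induction n with
  | zero => simp [risingFac]
  | succ k ih =>
    rw [risingFac, Finset.prod_range_succ, ← risingFac, ih, Nat.factorial_succ]
    push_cast; ring

lemma Gamma_add_nat {q : ℝ} (hq : 0 < q) (n : ℕ) :
    Real.Gamma (q + n) = Real.Gamma q * risingFac q n := by
  induction n with
  | zero => simp [risingFac]
  | succ k ih =>
    have h1 : q + ((k : ℕ) + 1 : ℕ) = (q + k) + 1 := by push_cast; ring
    rw [h1, Real.Gamma_add_one (by positivity : q + (k:ℝ) ≠ 0), ih]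
    simp only [risingFac, Finset.prod_range_succ]
    ring

lemma betaFn_pos {a b : ℝ} (ha : 0 < a) (hb : 0 < b) : 0 < betaFn a b := by
  have := Real.Gamma_pos_of_pos ha
  have := Real.Gamma_pos_of_pos hb
  have := Real.Gamma_pos_of_pos (add_pos ha hb)
  exact div_pos (mul_pos ‹_› ‹_›) ‹_›

lemma betaFn_add_nat {a b : ℝ} (ha : 0 < a) (hb : 0 < b) (n : ℕ) :
    betaFn b (a + n) = betaFn b a * (risingFac a n / risingFac (a + b) n) := by
  have h1 : b + (a + n) = (b + a) + n := by ring
  have h2 : b + a = a + b := by ring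
  rw [betaFn, betaFn, h1, Gamma_add_nat ha, Gamma_add_nat (by positivity : (0:ℝ) < b + a), h2]
  have g1 := (Real.Gamma_pos_of_pos (by positivity : (0:ℝ) < a + b)).ne'
  have g2 := (risingFac_pos (by positivity : (0:ℝ) < a + b) n).ne'
  field_simp

lemma integrableOn_betaKer {c A : ℝ} (hc : 0 < c) (hA : 0 < A) :
    IntegrableOn (fun u : ℝ => u ^ (c - 1) * (1 - u) ^ (A - 1)) (Ioo 0 1) := by
  have h := (Complex.betaIntegral_convergent (u := (c : ℂ)) (v := (A : ℂ))
      (by simpa using hc) (by simpa using hA))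
  rw [intervalIntegrable_iff_integrableOn_Ioc_of_le zero_le_one] at h
  have h2 := (h.mono_set Ioo_subset_Ioc_self).norm
  refine IntegrableOn.congr_fun h2 (fun u hu => ?_) measurableSet_Ioo
  obtain ⟨hu0, hu1⟩ := hu
  rw [norm_mul,
    Complex.norm_cpow_eq_rpow_re_of_pos hu0,
    show (1 - (u:ℂ)) = ((1 - u : ℝ) : ℂ) by push_cast; ring,
    Complex.norm_cpow_eq_rpow_re_of_pos (by linarith : (0:ℝ) < 1 - u)]
  simp

lemma integral_betaKer {c A : ℝ} (hc : 0 < c) (hA : 0 < A) :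
    ∫ u in Ioo (0:ℝ) 1, u ^ (c - 1) * (1 - u) ^ (A - 1) = betaFn c A := by
  have key : Complex.betaIntegral (c : ℂ) (A : ℂ)
      = ((∫ u in Ioo (0:ℝ) 1, u ^ (c - 1) * (1 - u) ^ (A - 1) : ℝ) : ℂ) := by
    rw [Complex.betaIntegral, intervalIntegral.integral_of_le zero_le_one,
      integral_Ioc_eq_integral_Ioo]
    rw [show ((∫ u in Ioo (0:ℝ) 1, u ^ (c - 1) * (1 - u) ^ (A - 1) : ℝ) : ℂ)
        = ∫ u in Ioo (0:ℝ) 1, ((u ^ (c - 1) * (1 - u) ^ (A - 1) : ℝ) : ℂ) from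
      (integral_ofReal (f := fun u => u ^ (c - 1) * (1 - u) ^ (A - 1))).symm]
    refine setIntegral_congr_fun measurableSet_Ioo (fun u hu => ?_)
    obtain ⟨hu0, hu1⟩ := hu
    rw [Complex.ofReal_mul, Complex.ofReal_cpow hu0.le,
      Complex.ofReal_cpow (by linarith : (0:ℝ) ≤ 1 - u)]
    push_cast
    ring
  have hG := Complex.Gamma_mul_Gamma_eq_betaIntegral (s := (c:ℂ)) (t := (A:ℂ))
    (by simpa using hc) (by simpa using hA)
  rw [key] at hG
  have hca : (0:ℝ) < c + A := by linarith
  have hGa : Real.Gamma (c + A) ≠ 0 := (Real.Gamma_pos_of_pos hca).ne'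
  have : ((Real.Gamma c * Real.Gamma A : ℝ) : ℂ)
      = ((Real.Gamma (c + A) * ∫ u in Ioo (0:ℝ) 1, u ^ (c - 1) * (1 - u) ^ (A - 1) : ℝ) : ℂ) := by
    push_cast
    rw [← Complex.Gamma_ofReal, ← Complex.Gamma_ofReal, ← Complex.Gamma_ofReal]
    push_cast at hG ⊢
    exact hG
  have h2 := Complex.ofReal_injective this
  rw [betaFn, eq_div_iff hGa]
  linarith [h2]

lemma betaFn_comm (a b : ℝ) : betaFn a b = betaFn b a := by
  rw [betaFn, betaFn, add_comm]; ring

lemma real_exp_tsum (t : ℝ) : Real.exp t = ∑' n : ℕ, t ^ n / n.factorial := by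
  rw [Real.exp_eq_exp_ℝ, NormedSpace.exp_eq_tsum_div]

lemma risingFac_le {q r : ℝ} (hq : 0 < q) (hqr : q ≤ r) (k : ℕ) :
    risingFac q k ≤ risingFac r k :=
  Finset.prod_le_prod (fun i _ => by positivity) (fun i _ => by
    have : (0:ℝ) ≤ (i:ℝ) := Nat.cast_nonneg i
    linarith)

lemma betaFn_add_le {A b : ℝ} (hA : 0 < A) (hb : 0 < b) (k : ℕ) :
    betaFn (b + k) A ≤ betaFn b A := by
  rw [betaFn_comm, betaFn_add_nat hb hA, betaFn_comm A b]
  have h1 := risingFac_pos (show (0:ℝ) < b + A by linarith) k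
  have h2 := risingFac_le hb (le_add_of_nonneg_right hA.le) k
  have h3 := betaFn_pos hb hA
  calc betaFn b A * (risingFac b k / risingFac (b + A) k)
      ≤ betaFn b A * 1 := by
        apply mul_le_mul_of_nonneg_left _ h3.le
        rw [div_le_one h1]; exact h2
    _ = betaFn b A := mul_one _

lemma g_integral {A b x y : ℝ} (hA : 0 < A) (hb : 0 < b) (hy : |y| < 1) :
    ∫ u in Ioo (0:ℝ) 1, u ^ (b - 1) * (1 - u) ^ (A - 1) * (1 - y * u)⁻¹ * Real.exp (x * u)
      = betaFn b A * Phi1 b 1 (A + b) x y := by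
  set F : ℕ × ℕ → ℝ → ℝ := fun p u =>
    u ^ (b - 1) * (1 - u) ^ (A - 1) * ((x * u) ^ p.1 / p.1.factorial) * (y * u) ^ p.2 with hF
  have hbk : ∀ p : ℕ × ℕ, (0:ℝ) < b + ((p.1 + p.2 : ℕ) : ℝ) :=
    fun p => by positivity
  have hpow : ∀ (p : ℕ × ℕ) (u : ℝ), u ∈ Ioo (0:ℝ) 1 → F p u
      = (x ^ p.1 / p.1.factorial * y ^ p.2) *
        (u ^ (b + ((p.1 + p.2 : ℕ) : ℝ) - 1) * (1 - u) ^ (A - 1)) := by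
    rintro p u ⟨hu0, hu1⟩
    have : u ^ (b + ((p.1 + p.2 : ℕ) : ℝ) - 1)
        = u ^ (b - 1) * u ^ p.1 * u ^ p.2 := by
      rw [← Real.rpow_natCast u p.1, ← Real.rpow_natCast u p.2,
        ← Real.rpow_add hu0, ← Real.rpow_add hu0]
      congr 1
      push_cast; ring
    rw [this, hF]
    simp only [mul_pow, div_mul_eq_mul_div, mul_div_assoc]
    ring
  have hint : ∀ p : ℕ × ℕ, IntegrableOn (F p) (Ioo (0:ℝ) 1) := by
    intro p
    refine IntegrableOn.congr_fun
      (((integrableOn_betaKer (hbk p) hA).const_mul (x ^ p.1 / p.1.factorial * y ^ p.2)))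
      (fun u hu => (hpow p u hu).symm) measurableSet_Ioo
  have hval : ∀ p : ℕ × ℕ, ∫ u in Ioo (0:ℝ) 1, F p u
      = (x ^ p.1 / p.1.factorial * y ^ p.2) * betaFn (b + ((p.1 + p.2 : ℕ) : ℝ)) A := by
    intro p
    rw [setIntegral_congr_fun measurableSet_Ioo (hpow p), MeasureTheory.integral_const_mul,
      integral_betaKer (hbk p) hA]
  have hnorm : ∀ p : ℕ × ℕ, ∫ u in Ioo (0:ℝ) 1, ‖F p u‖
      = (|x| ^ p.1 / p.1.factorial * |y| ^ p.2) * betaFn (b + ((p.1 + p.2 : ℕ) : ℝ)) A := by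
    intro p
    rw [setIntegral_congr_fun (f := fun u => ‖F p u‖) measurableSet_Ioo
        (g := fun u => (|x| ^ p.1 / p.1.factorial * |y| ^ p.2) *
          (u ^ (b + ((p.1 + p.2 : ℕ) : ℝ) - 1) * (1 - u) ^ (A - 1)))
        (fun u hu => ?_), MeasureTheory.integral_const_mul, integral_betaKer (hbk p) hA]
    obtain ⟨hu0, hu1⟩ := hu
    show ‖F p u‖ = |x| ^ p.1 / p.1.factorial * |y| ^ p.2 *
      (u ^ (b + ((p.1 + p.2 : ℕ) : ℝ) - 1) * (1 - u) ^ (A - 1))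
    rw [Real.norm_eq_abs, hpow p u ⟨hu0, hu1⟩, abs_mul]
    have hker : (0:ℝ) ≤ u ^ (b + ((p.1 + p.2 : ℕ) : ℝ) - 1) * (1 - u) ^ (A - 1) := by
      have := Real.rpow_nonneg hu0.le (b + ((p.1 + p.2 : ℕ) : ℝ) - 1)
      have := Real.rpow_nonneg (by linarith : (0:ℝ) ≤ 1 - u) (A - 1)
      positivity
    rw [abs_of_nonneg hker]
    congr 1
    rw [abs_mul, abs_div, abs_pow, abs_pow, Nat.abs_cast]
  have h1 : Summable fun m : ℕ => ‖|x| ^ m / m.factorial‖ := by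
    simpa [Real.norm_eq_abs, abs_div, abs_pow, abs_abs, Nat.abs_cast] using
      Real.summable_pow_div_factorial |x|
  have h2 : Summable fun n : ℕ => ‖|y| ^ n‖ := by
    simpa [Real.norm_eq_abs, abs_pow, abs_abs] using
      summable_geometric_of_lt_one (abs_nonneg y) hy
  have hT : Summable fun p : ℕ × ℕ => (|x| ^ p.1 / p.1.factorial) * |y| ^ p.2 :=
    summable_mul_of_summable_norm h1 h2
  have hsum : Summable fun p : ℕ × ℕ => ∫ u in Ioo (0:ℝ) 1, ‖F p u‖ := by
    refine Summable.of_nonneg_of_le (fun p => ?_) (fun p => ?_) (hT.mul_right (betaFn b A))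
    · exact integral_nonneg fun u => norm_nonneg _
    · rw [hnorm p]
      exact mul_le_mul_of_nonneg_left (betaFn_add_le hA hb _)
        (by positivity)
  have swap := MeasureTheory.integral_tsum_of_summable_integral_norm
    (μ := volume.restrict (Ioo (0:ℝ) 1)) hint hsum
  have hptsum : ∀ u ∈ Ioo (0:ℝ) 1, (∑' p : ℕ × ℕ, F p u)
      = u ^ (b - 1) * (1 - u) ^ (A - 1) * (1 - y * u)⁻¹ * Real.exp (x * u) := by
    rintro u ⟨hu0, hu1⟩
    have hyu : ‖y * u‖ < 1 := by
      rw [Real.norm_eq_abs, abs_mul, abs_of_pos hu0]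
      nlinarith [abs_nonneg y]
    have hf : Summable fun m : ℕ => ‖(x * u) ^ m / m.factorial‖ := by
      simpa [Real.norm_eq_abs, abs_div, abs_pow, Nat.abs_cast] using
        Real.summable_pow_div_factorial (|x| * |u|)
    have hg : Summable fun n : ℕ => ‖(y * u) ^ n‖ := by
      simpa [norm_pow] using summable_geometric_of_lt_one (norm_nonneg (y * u)) hyu
    calc (∑' p : ℕ × ℕ, F p u)
        = ∑' p : ℕ × ℕ, (u ^ (b - 1) * (1 - u) ^ (A - 1)) *
            (((x * u) ^ p.1 / p.1.factorial) * (y * u) ^ p.2) := by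
          apply tsum_congr; intro p; rw [hF]; ring
      _ = (u ^ (b - 1) * (1 - u) ^ (A - 1)) *
            ∑' p : ℕ × ℕ, ((x * u) ^ p.1 / p.1.factorial) * (y * u) ^ p.2 := tsum_mul_left
      _ = u ^ (b - 1) * (1 - u) ^ (A - 1) * (1 - y * u)⁻¹ * Real.exp (x * u) := by
          rw [← tsum_mul_tsum_of_summable_norm hf hg, tsum_geometric_of_norm_lt_one hyu,
            ← real_exp_tsum]
          ring
  calc ∫ u in Ioo (0:ℝ) 1, u ^ (b - 1) * (1 - u) ^ (A - 1) * (1 - y * u)⁻¹ * Real.exp (x * u)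
      = ∫ u in Ioo (0:ℝ) 1, (∑' p : ℕ × ℕ, F p u) :=
        (setIntegral_congr_fun measurableSet_Ioo hptsum).symm
    _ = ∑' p : ℕ × ℕ, ∫ u in Ioo (0:ℝ) 1, F p u := swap.symm
    _ = ∑' p : ℕ × ℕ, betaFn b A *
          (risingFac b (p.1 + p.2) * risingFac 1 p.2 /
            (risingFac (A + b) (p.1 + p.2) * (Nat.factorial p.1) * (Nat.factorial p.2)) *
            x ^ p.1 * y ^ p.2) := by
        apply tsum_congr
        intro p
        rw [hval p, betaFn_comm, betaFn_add_nat hb hA, risingFac_one, betaFn_comm A b]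
        have e1 : b + A = A + b := by ring
        rw [e1]
        have n1 : (Nat.factorial p.1 : ℝ) ≠ 0 := Nat.cast_ne_zero.2 p.1.factorial_ne_zero
        have n2 : (Nat.factorial p.2 : ℝ) ≠ 0 := Nat.cast_ne_zero.2 p.2.factorial_ne_zero
        have n3 : risingFac (A + b) (p.1 + p.2) ≠ 0 :=
          (risingFac_pos (by linarith) _).ne'
        field_simp
    _ = betaFn b A * Phi1 b 1 (A + b) x y := by rw [Phi1, tsum_mul_left]

lemma g_integrableOn {A b x y : ℝ} (hA : 0 < A) (hb : 0 < b) (hy : |y| < 1) :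
    IntegrableOn (fun u : ℝ => u ^ (b - 1) * (1 - u) ^ (A - 1) * (1 - y * u)⁻¹ *
      Real.exp (x * u)) (Ioo 0 1) := by
  have hbase : IntervalIntegrable (fun u : ℝ => u ^ (b - 1) * (1 - u) ^ (A - 1))
      volume 0 1 := by
    rw [intervalIntegrable_iff_integrableOn_Ioc_of_le zero_le_one,
      integrableOn_Ioc_iff_integrableOn_Ioo]
    exact integrableOn_betaKer hb hA
  have hcont : ContinuousOn (fun u : ℝ => (1 - y * u)⁻¹ * Real.exp (x * u))
      (Set.uIcc (0:ℝ) 1) := by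
    rw [Set.uIcc_of_le zero_le_one]
    refine ContinuousOn.mul (ContinuousOn.inv₀ (by fun_prop) ?_) (by fun_prop)
    rintro u ⟨hu0, hu1⟩
    have : |y * u| < 1 := by
      rw [abs_mul, abs_of_nonneg hu0]
      nlinarith [abs_nonneg y]
    have := abs_lt.mp this
    intro hc
    nlinarith [this.2]
  have h := hbase.mul_continuousOn hcont
  rw [intervalIntegrable_iff_integrableOn_Ioc_of_le zero_le_one,
    integrableOn_Ioc_iff_integrableOn_Ioo] at h
  exact h.congr_fun (fun u _ => by ring) measurableSet_Ioo

lemma g_int_pos {A b x y : ℝ} (hA : 0 < A) (hb : 0 < b) (hy : |y| < 1) :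
    0 < ∫ u in Ioo (0:ℝ) 1, u ^ (b - 1) * (1 - u) ^ (A - 1) * (1 - y * u)⁻¹ *
      Real.exp (x * u) := by
  have hpos : ∀ u ∈ Ioo (0:ℝ) 1, 0 < u ^ (b - 1) * (1 - u) ^ (A - 1) * (1 - y * u)⁻¹ *
      Real.exp (x * u) := by
    rintro u ⟨hu0, hu1⟩
    have h1 : (0:ℝ) < u ^ (b - 1) := Real.rpow_pos_of_pos hu0 _
    have h2 : (0:ℝ) < (1 - u) ^ (A - 1) := Real.rpow_pos_of_pos (by linarith) _
    have h3 : (0:ℝ) < 1 - y * u := by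
      have : |y * u| < 1 := by
        rw [abs_mul, abs_of_nonneg hu0.le]; nlinarith [abs_nonneg y]
      have := abs_lt.mp this
      linarith [this.2]
    positivity
  have hInt := g_integrableOn (x := x) hA hb hy
  have hae : 0 ≤ᵐ[volume.restrict (Ioo (0:ℝ) 1)] fun u : ℝ =>
      u ^ (b - 1) * (1 - u) ^ (A - 1) * (1 - y * u)⁻¹ * Real.exp (x * u) :=
    (ae_restrict_iff' measurableSet_Ioo).mpr
      (Filter.Eventually.of_forall fun u hu => (hpos u hu).le)
  rw [setIntegral_pos_iff_support_of_nonneg_ae hae hInt]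
  refine lt_of_lt_of_le ?_ (measure_mono (fun u hu =>
    ⟨Function.mem_support.mpr (hpos u hu).ne', hu⟩))
  rw [Real.volume_Ioo]
  norm_num

lemma hbKer_comp (A b τ s u : ℝ) :
    hbKer A b τ s (1 - u)
      = Real.exp (-s) * (u ^ (b - 1) * (1 - u) ^ (A - 1) * (1 - (1 - 1 / τ ^ 2) * u)⁻¹ *
        Real.exp (s * u)) := by
  rw [hbKer, sub_sub_cancel,
    show 1 / τ ^ 2 + (1 - 1 / τ ^ 2) * (1 - u) = 1 - (1 - 1 / τ ^ 2) * u by ring,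
    show -(s * (1 - u)) = -s + s * u by ring, Real.exp_add]
  ring

lemma hbC_eq (A b τ s : ℝ) :
    hbC A b τ s = Real.exp (-s) * ∫ u in Ioo (0:ℝ) 1,
      u ^ (b - 1) * (1 - u) ^ (A - 1) * (1 - (1 - 1 / τ ^ 2) * u)⁻¹ * Real.exp (s * u) := by
  rw [hbC]
  have h1 : ∫ κ in Ioo (0:ℝ) 1, hbKer A b τ s κ = ∫ κ in (0:ℝ)..1, hbKer A b τ s κ := by
    rw [intervalIntegral.integral_of_le zero_le_one, integral_Ioc_eq_integral_Ioo]
  have h2 := intervalIntegral.integral_comp_sub_left (a := (0:ℝ)) (b := (1:ℝ))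
    (hbKer A b τ s) 1
  rw [show (1:ℝ) - 1 = 0 by norm_num, show (1:ℝ) - 0 = 1 by norm_num] at h2
  rw [h1, ← h2, intervalIntegral.integral_of_le zero_le_one, integral_Ioc_eq_integral_Ioo]
  simp_rw [hbKer_comp]
  rw [MeasureTheory.integral_const_mul]

lemma hbC_formula {A b τ s : ℝ} (hA : 0 < A) (hb : 0 < b) (hy : |1 - 1 / τ ^ 2| < 1) :
    hbC A b τ s = Real.exp (-s) * (betaFn b A * Phi1 b 1 (A + b) s (1 - 1 / τ ^ 2)) := by
  rw [hbC_eq, g_integral hA hb hy]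

lemma Phi1_pos {A b s τ : ℝ} (hA : 0 < A) (hb : 0 < b) (hy : |1 - 1 / τ ^ 2| < 1) :
    0 < Phi1 b 1 (A + b) s (1 - 1 / τ ^ 2) := by
  have h := g_int_pos (x := s) hA hb hy
  rw [g_integral hA hb hy] at h
  have hbeta := betaFn_pos hb hA
  nlinarith

theorem hb_posterior_moments (a b τ s σ y : ℝ) (ha : 0 < a) (hb : 0 < b) (hτ : 0 < τ)
    (hτ' : |1 - 1 / τ ^ 2| < 1) (hσ : 0 < σ) (n : ℕ) (hn : 0 < n) :
    ∫ κ in Set.Ioo (0 : ℝ) 1,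
        (κ : ℝ) ^ n * hbPdf (a + 1 / 2) b τ (s + y ^ 2 / (2 * σ ^ 2)) κ =
      risingFac (a + 1 / 2) n / risingFac (a + 1 / 2 + b) n *
        (Phi1 b 1 (a + 1 / 2 + b + n) (s + y ^ 2 / (2 * σ ^ 2)) (1 - 1 / τ ^ 2) /
          Phi1 b 1 (a + 1 / 2 + b) (s + y ^ 2 / (2 * σ ^ 2)) (1 - 1 / τ ^ 2)) := by
  set a' : ℝ := a + 1 / 2 with ha'
  set s' : ℝ := s + y ^ 2 / (2 * σ ^ 2) with hs'
  have ha0 : 0 < a' := by rw [ha']; linarith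
  have han : 0 < a' + (n:ℝ) := by positivity
  have hstep : ∫ κ in Set.Ioo (0 : ℝ) 1, (κ : ℝ) ^ n * hbPdf a' b τ s' κ
      = (hbC a' b τ s')⁻¹ * hbC (a' + n) b τ s' := by
    have e : ∀ κ : ℝ, (κ:ℝ) ^ n * hbPdf a' b τ s' κ
        = (hbC a' b τ s')⁻¹ * ((κ:ℝ) ^ n * hbKer a' b τ s' κ) := by
      intro κ; rw [hbPdf]; ring
    simp_rw [e]
    rw [MeasureTheory.integral_const_mul]
    congr 1
    rw [hbC]
    refine setIntegral_congr_fun measurableSet_Ioo (fun κ hκ => ?_)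
    obtain ⟨h0, h1⟩ := hκ
    show (κ:ℝ) ^ n * hbKer a' b τ s' κ = hbKer (a' + n) b τ s' κ
    rw [hbKer, hbKer]
    have : κ ^ (a' + (n:ℝ) - 1) = κ ^ (n:ℕ) * κ ^ (a' - 1) := by
      rw [← Real.rpow_natCast κ n, ← Real.rpow_add h0]
      congr 1; ring
    rw [this]; ring
  rw [hstep, hbC_formula han hb hτ', hbC_formula ha0 hb hτ',
    betaFn_add_nat ha0 hb, show a' + (n:ℝ) + b = a' + b + (n:ℝ) by ring]
  have hb1 := (betaFn_pos hb ha0).ne'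
  have hr := (risingFac_pos (by linarith : (0:ℝ) < a' + b) n).ne'
  have hphi := (Phi1_pos (s := s') ha0 hb hτ').ne'
  have hexp := (Real.exp_pos (-s')).ne'
  have key : ∀ E B P0 Pn R0 R1 : ℝ, E ≠ 0 → B ≠ 0 → P0 ≠ 0 → R1 ≠ 0 →
      (E * (B * P0))⁻¹ * (E * (B * (R0 / R1) * Pn)) = R0 / R1 * (Pn / P0) := by
    intros E B P0 Pn R0 R1 h1 h2 h3 h4
    field_simp
  exact key _ _ _ _ _ _ hexp hb1 hphi hr
end

section
/- Let a, b, τ > 0, s ∈ ℝ, σ > 0, and y ∈ ℝ. Suppose y given κ has density N(y; 0, σ²/κ) and κ has prior density π_{a,b,τ,s}. Then the posterior of κ given y is again hypergeometric-beta with updated parameters: for every κ ∈ (0,1), N(y; 0, σ²/κ) π_{a,b,τ,s}(κ) / [∫₀¹ N(y; 0, σ²/u) π_{a,b,τ,s}(u) du] = π_{a+1/2, b, τ, s + y²/(2σ²)}(κ). -/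
open MeasureTheory Set

/-- The normal density with mean `μ` and variance `v`. -/
noncomputable def normPdf (y μ v : ℝ) : ℝ :=
  (2 * Real.pi * v) ^ (-(1 : ℝ) / 2) * Real.exp (-((y - μ) ^ 2) / (2 * v))

lemma betaInt {a b : ℝ} (ha : 0 < a) (hb : 0 < b) :
    IntegrableOn (fun x : ℝ => x ^ (a - 1) * (1 - x) ^ (b - 1)) (Ioo (0:ℝ) 1) := by
  have h := (Complex.betaIntegral_convergent (u := (a:ℂ)) (v := (b:ℂ)) (by simpa) (by simpa))
  have h2 : IntegrableOn (fun x : ℝ => (x : ℂ) ^ ((a:ℂ) - 1) * (1 - (x:ℂ)) ^ ((b:ℂ) - 1))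
      (Ioc (0:ℝ) 1) := by
    rw [intervalIntegrable_iff_integrableOn_Ioc_of_le (by norm_num)] at h
    exact h
  have h3 : IntegrableOn (fun x : ℝ => ‖(x : ℂ) ^ ((a:ℂ) - 1) * (1 - (x:ℂ)) ^ ((b:ℂ) - 1)‖)
      (Ioo (0:ℝ) 1) := IntegrableOn.mono_set h2.norm Ioo_subset_Ioc_self
  refine h3.congr_fun (fun x hx => ?_) measurableSet_Ioo
  have hx0 : (0:ℝ) < x := hx.1
  have hx1 : (0:ℝ) < 1 - x := by linarith [hx.2]
  simp only [norm_mul]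
  rw [show (1 - (x:ℂ)) = ((1 - x : ℝ) : ℂ) by push_cast; ring]
  rw [Complex.norm_cpow_eq_rpow_re_of_pos hx0, Complex.norm_cpow_eq_rpow_re_of_pos hx1]
  norm_num

lemma den_pos {τ κ : ℝ} (hτ : 0 < τ) (h0 : 0 < κ) (h1 : κ < 1) :
    0 < 1 / τ ^ 2 + (1 - 1 / τ ^ 2) * κ := by
  have hτ2 : 0 < 1 / τ ^ 2 := by positivity
  nlinarith

lemma hbKer_pos {a b τ s κ : ℝ} (hτ : 0 < τ) (h0 : 0 < κ) (h1 : κ < 1) :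
    0 < hbKer a b τ s κ := by
  have h2 : (0:ℝ) < 1 - κ := by linarith
  have := den_pos (κ := κ) hτ h0 h1
  unfold hbKer
  positivity

lemma hbKer_integrable {a b : ℝ} (τ s : ℝ) (ha : 0 < a) (hb : 0 < b) (hτ : 0 < τ) :
    IntegrableOn (fun κ => hbKer a b τ s κ) (Ioo (0:ℝ) 1) := by
  set m : ℝ := min (1 / τ ^ 2) 1 with hm
  have hmpos : 0 < m := by positivity
  have hcont : ContinuousOn (fun κ => hbKer a b τ s κ) (Ioo (0:ℝ) 1) := by
    unfold hbKer
    refine ContinuousOn.mul (ContinuousOn.mul (ContinuousOn.mul ?_ ?_) ?_) ?_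
    · exact fun x hx => (Real.continuousAt_rpow_const x _ (Or.inl (ne_of_gt hx.1))).continuousWithinAt
    · refine ContinuousOn.rpow_const (continuous_const.sub continuous_id).continuousOn
        (fun x hx => Or.inl (by linarith [hx.2] : (1:ℝ) - x ≠ 0))
    · refine ContinuousOn.inv₀ (Continuous.continuousOn (by continuity))
        (fun x hx => ne_of_gt (den_pos hτ hx.1 hx.2))
    · exact Continuous.continuousOn (by continuity)
  refine Integrable.mono' (((betaInt ha hb).const_mul (m⁻¹ * Real.exp |s|)))
    (hcont.aestronglyMeasurable measurableSet_Ioo) ?_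
  refine (ae_restrict_iff' measurableSet_Ioo).mpr (Filter.Eventually.of_forall fun x hx => ?_)
  have h0 := hx.1; have h1 := hx.2
  have h2 : (0:ℝ) < 1 - x := by linarith
  have hden := den_pos (κ := x) hτ h0 h1
  have hdm : m ≤ 1 / τ ^ 2 + (1 - 1 / τ ^ 2) * x := by
    have h3 : m ≤ 1 / τ ^ 2 := min_le_left _ _
    have h4 : m ≤ 1 := min_le_right _ _
    nlinarith
  have hinv : (1 / τ ^ 2 + (1 - 1 / τ ^ 2) * x)⁻¹ ≤ m⁻¹ :=
    inv_anti₀ hmpos hdm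
  have hexp : Real.exp (-(s * x)) ≤ Real.exp |s| := by
    apply Real.exp_le_exp.mpr
    have : |s * x| ≤ |s| := by
      rw [abs_mul]
      nlinarith [abs_nonneg s, abs_of_pos h0]
    linarith [neg_abs_le (s * x)]
  rw [Real.norm_eq_abs, abs_of_pos (hbKer_pos hτ h0 h1)]
  unfold hbKer
  have hb1 : (0:ℝ) ≤ x ^ (a - 1) * (1 - x) ^ (b - 1) := by positivity
  calc x ^ (a - 1) * (1 - x) ^ (b - 1) * (1 / τ ^ 2 + (1 - 1 / τ ^ 2) * x)⁻¹ * Real.exp (-(s * x))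
      ≤ x ^ (a - 1) * (1 - x) ^ (b - 1) * m⁻¹ * Real.exp |s| := by
        apply mul_le_mul (by apply mul_le_mul_of_nonneg_left hinv hb1) hexp
          (Real.exp_pos _).le (by positivity)
    _ = m⁻¹ * Real.exp |s| * (x ^ (a - 1) * (1 - x) ^ (b - 1)) := by ring
    _ ≤ m⁻¹ * Real.exp |s| * (x ^ (a - 1) * (1 - x) ^ (b - 1)) := le_refl _

lemma hbC_pos {a b : ℝ} (τ s : ℝ) (ha : 0 < a) (hb : 0 < b) (hτ : 0 < τ) :
    0 < hbC a b τ s := by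
  rw [hbC]
  rw [setIntegral_pos_iff_support_of_nonneg_ae ?_ (hbKer_integrable τ s ha hb hτ)]
  · have : Ioo (0:ℝ) 1 ⊆ Function.support (fun κ => hbKer a b τ s κ) ∩ Ioo 0 1 := by
      intro x hx
      exact ⟨ne_of_gt (hbKer_pos hτ hx.1 hx.2), hx⟩
    calc (0:ENNReal) < volume (Ioo (0:ℝ) 1) := by simp
      _ ≤ _ := measure_mono this
  · refine (ae_restrict_iff' measurableSet_Ioo).mpr (Filter.Eventually.of_forall fun x hx => ?_)
    exact (hbKer_pos hτ hx.1 hx.2).le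

lemma key_pointwise {a b τ s σ y : ℝ} (hτ : 0 < τ) (hσ : 0 < σ) {κ : ℝ}
    (h0 : 0 < κ) (h1 : κ < 1) :
    normPdf y 0 (σ ^ 2 / κ) * hbKer a b τ s κ =
      (2 * Real.pi * σ ^ 2) ^ (-(1:ℝ) / 2) * hbKer (a + 1/2) b τ (s + y ^ 2 / (2 * σ ^ 2)) κ := by
  have hσ2 : (0:ℝ) < σ ^ 2 := by positivity
  have hpi : (0:ℝ) < 2 * Real.pi * σ ^ 2 := by positivity
  unfold normPdf hbKer
  have hpow : (2 * Real.pi * (σ ^ 2 / κ)) ^ (-(1:ℝ) / 2)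
      = (2 * Real.pi * σ ^ 2) ^ (-(1:ℝ) / 2) * κ ^ ((1:ℝ)/2) := by
    rw [show 2 * Real.pi * (σ ^ 2 / κ) = (2 * Real.pi * σ ^ 2) / κ by ring,
      Real.div_rpow hpi.le h0.le, div_eq_mul_inv, ← Real.rpow_neg h0.le]
    norm_num
  rw [hpow]
  have hexp : Real.exp (-((y - 0) ^ 2) / (2 * (σ ^ 2 / κ))) * Real.exp (-(s * κ))
      = Real.exp (-((s + y ^ 2 / (2 * σ ^ 2)) * κ)) := by
    rw [← Real.exp_add]
    congr 1
    field_simp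
    ring
  have hκpow : κ ^ ((1:ℝ)/2) * κ ^ (a - 1) = κ ^ (a + 1/2 - 1) := by
    rw [← Real.rpow_add h0]
    ring_nf
  calc (2 * Real.pi * σ ^ 2) ^ (-(1:ℝ)/2) * κ ^ ((1:ℝ)/2) *
        Real.exp (-((y - 0) ^ 2) / (2 * (σ ^ 2 / κ))) *
        (κ ^ (a - 1) * (1 - κ) ^ (b - 1) * (1 / τ ^ 2 + (1 - 1 / τ ^ 2) * κ)⁻¹ *
          Real.exp (-(s * κ)))
      = (2 * Real.pi * σ ^ 2) ^ (-(1:ℝ)/2) * ((κ ^ ((1:ℝ)/2) * κ ^ (a - 1)) *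
          (1 - κ) ^ (b - 1) * (1 / τ ^ 2 + (1 - 1 / τ ^ 2) * κ)⁻¹ *
          (Real.exp (-((y - 0) ^ 2) / (2 * (σ ^ 2 / κ))) * Real.exp (-(s * κ)))) := by ring
    _ = _ := by rw [hκpow, hexp]

theorem hb_conjugacy (a b τ s σ y : ℝ) (ha : 0 < a) (hb : 0 < b) (hτ : 0 < τ)
    (hσ : 0 < σ) :
    ∀ κ ∈ Set.Ioo (0 : ℝ) 1,
      normPdf y 0 (σ ^ 2 / κ) * hbPdf a b τ s κ /
          (∫ u in Set.Ioo (0 : ℝ) 1, normPdf y 0 (σ ^ 2 / u) * hbPdf a b τ s u) =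
        hbPdf (a + 1 / 2) b τ (s + y ^ 2 / (2 * σ ^ 2)) κ := by
  intro κ hκ
  set s' : ℝ := s + y ^ 2 / (2 * σ ^ 2) with hs'
  set C0 : ℝ := (2 * Real.pi * σ ^ 2) ^ (-(1:ℝ) / 2) with hC0
  have hC0pos : 0 < C0 := Real.rpow_pos_of_pos (by positivity) _
  have hCa : 0 < hbC a b τ s := hbC_pos τ s ha hb hτ
  have hCa' : 0 < hbC (a + 1/2) b τ s' := hbC_pos τ s' (by linarith) hb hτ
  have hint : (∫ u in Set.Ioo (0 : ℝ) 1, normPdf y 0 (σ ^ 2 / u) * hbPdf a b τ s u)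
      = (hbC a b τ s)⁻¹ * C0 * hbC (a + 1/2) b τ s' := by
    have : ∀ u ∈ Ioo (0:ℝ) 1, normPdf y 0 (σ ^ 2 / u) * hbPdf a b τ s u
        = (hbC a b τ s)⁻¹ * C0 * hbKer (a + 1/2) b τ s' u := by
      intro u hu
      unfold hbPdf
      rw [show normPdf y 0 (σ ^ 2 / u) * ((hbC a b τ s)⁻¹ * hbKer a b τ s u)
          = (hbC a b τ s)⁻¹ * (normPdf y 0 (σ ^ 2 / u) * hbKer a b τ s u) by ring,
        key_pointwise hτ hσ hu.1 hu.2]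
      ring
    rw [setIntegral_congr_fun measurableSet_Ioo this, integral_const_mul, hbC]
    rfl
  rw [hint]
  unfold hbPdf
  rw [show normPdf y 0 (σ ^ 2 / κ) * ((hbC a b τ s)⁻¹ * hbKer a b τ s κ)
      = (hbC a b τ s)⁻¹ * (normPdf y 0 (σ ^ 2 / κ) * hbKer a b τ s κ) by ring,
    key_pointwise hτ hσ hκ.1 hκ.2, ← hC0, ← hs']
  clear_value s' C0
  have h1 : hbC a b τ s ≠ 0 := ne_of_gt hCa
  have h2 : hbC (a + 1/2) b τ s' ≠ 0 := ne_of_gt hCa'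
  have h3 : C0 ≠ 0 := ne_of_gt hC0pos
  field_simp
end
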